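/- Let 0<σ≤1 and 1/σ<p<∞. There is a constant C, depending only on p, such that for every g∈L^p(𝕋), the function A(g) satisfies (∫_𝔻 |A(g)(z)|^p dm(z))^{1/p} ≤ C (∫₀^{2π} |g(t)|^p dt)^{1/p}. -/

import Mathlib

open MeasureTheory Metric Set
open scoped ENNReal

noncomputable section

/-- The operator `A(g)(z) = ∫₀^{2π} ((e^{it}+z)/(e^{it}-z)) g(t) dt` for `z` in the unit disk. -/
def Aop (g : ℝ → ℂ) (z : ℂ) : ℂ :=
  ∫ t in (0:ℝ)..(2 * Real.pi),
    ((Complex.exp (t * Complex.I) + z) / (Complex.exp (t * Complex.I) - z)) * g t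

namespace Statement0Aux

lemma two_pi_pos : (0:ℝ) < 2 * Real.pi := by positivity

/-- point on the unit circle -/
def cpt (t : ℝ) : ℂ := Complex.exp (t * Complex.I)

lemma norm_cpt (t : ℝ) : ‖cpt t‖ = 1 := by
  rw [cpt]; exact Complex.norm_exp_ofReal_mul_I t

lemma cpt_sub (t θ : ℝ) : cpt t - cpt θ = cpt θ * (cpt (t - θ) - 1) := by
  rw [cpt, cpt, cpt, mul_sub, mul_one, ← Complex.exp_add]
  congr 2
  push_cast; ring

lemma cpt_per (t : ℝ) : cpt (t + 2 * Real.pi) = cpt t := by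
  rw [cpt, cpt, show ((t + 2*Real.pi : ℝ) : ℂ) * Complex.I
      = (t:ℂ) * Complex.I + 2*Real.pi*Complex.I by push_cast; ring,
    Complex.exp_add, Complex.exp_two_pi_mul_I, mul_one]

lemma norm_cpt_sub_one (t : ℝ) : ‖cpt t - 1‖ = 2 * |Real.sin (t/2)| := by
  have hcos : Real.cos t = 1 - 2 * Real.sin (t/2)^2 := by
    have h1 := Real.cos_two_mul (t/2)
    have h2 := Real.sin_sq_add_cos_sq (t/2)
    have h4 : 2*(t/2) = t := by ring
    rw [h4] at h1; linarith
  have hsin : Real.sin t = 2 * Real.sin (t/2) * Real.cos (t/2) := by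
    have h1 := Real.sin_two_mul (t/2)
    have h4 : 2*(t/2) = t := by ring
    rw [h4] at h1; exact h1
  have h2 := Real.sin_sq_add_cos_sq (t/2)
  rw [cpt, Complex.norm_def, Complex.normSq_apply]
  simp only [Complex.sub_re, Complex.sub_im, Complex.one_re, Complex.one_im,
    Complex.exp_ofReal_mul_I_re, Complex.exp_ofReal_mul_I_im]
  rw [show (Real.cos t - 1) * (Real.cos t - 1) + (Real.sin t - 0) * (Real.sin t - 0)
      = (2 * Real.sin (t/2))^2 by rw [hcos, hsin]; nlinarith [h2]]
  rw [Real.sqrt_sq_eq_abs, abs_mul]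
  norm_num

lemma sin_lower {t : ℝ} (ht0 : 0 < t) (ht : t ≤ 2*Real.pi) :
    min t (2*Real.pi - t) / Real.pi ≤ 2 * |Real.sin (t/2)| := by
  have hpi := Real.pi_pos
  have hnn : 0 ≤ Real.sin (t/2) :=
    Real.sin_nonneg_of_nonneg_of_le_pi (by linarith) (by linarith)
  rw [abs_of_nonneg hnn]
  rcases le_total t Real.pi with h | h
  · rw [min_eq_left (by linarith)]
    have hle := Real.mul_le_sin (x := t/2) (by linarith) (by linarith)
    calc t / Real.pi = 2/Real.pi * (t/2) := by ring
      _ ≤ Real.sin (t/2) := hle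
      _ ≤ 2 * Real.sin (t/2) := by linarith
  · rw [min_eq_right (by linarith)]
    have hle := Real.mul_le_sin (x := Real.pi - t/2) (by linarith) (by linarith)
    rw [Real.sin_pi_sub] at hle
    calc (2*Real.pi - t) / Real.pi = 2/Real.pi * (Real.pi - t/2) := by ring
      _ ≤ Real.sin (t/2) := hle
      _ ≤ 2 * Real.sin (t/2) := by linarith

/-- antitonicity of negative powers in `ℝ≥0∞` -/
lemma rpow_neg_le_rpow_neg {x y : ℝ≥0∞} (h : x ≤ y) {s : ℝ} (hs : 0 ≤ s) :
    y ^ (-s) ≤ x ^ (-s) := by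
  rw [ENNReal.rpow_neg, ENNReal.rpow_neg]
  exact ENNReal.inv_le_inv.mpr (ENNReal.rpow_le_rpow h hs)

/-- The basic singular integral over the circle. -/
def Es (s : ℝ) : ℝ≥0∞ :=
  ∫⁻ t in Ioc 0 (2*Real.pi), ENNReal.ofReal (‖cpt t - 1‖ / 2) ^ (-s)

lemma Es_lt_top {s : ℝ} (hs0 : 0 ≤ s) (hs1 : s < 1) : Es s < ⊤ := by
  have hpi := Real.pi_pos
  have hb : ∀ t ∈ Ioc (0:ℝ) (2*Real.pi),
      ENNReal.ofReal (‖cpt t - 1‖ / 2) ^ (-s)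
        ≤ ENNReal.ofReal (min t (2*Real.pi - t) / (2*Real.pi)) ^ (-s) := by
    intro t ht
    refine rpow_neg_le_rpow_neg (ENNReal.ofReal_le_ofReal ?_) hs0
    have := sin_lower ht.1 ht.2
    rw [norm_cpt_sub_one]
    calc min t (2*Real.pi - t) / (2*Real.pi) = (min t (2*Real.pi - t) / Real.pi) / 2 := by ring
      _ ≤ 2 * |Real.sin (t/2)| / 2 := by linarith
  refine lt_of_le_of_lt (setLIntegral_mono' measurableSet_Ioc hb) ?_
  have hdisj : Disjoint (Ioc (0:ℝ) Real.pi) (Ioc Real.pi (2*Real.pi)) := by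
    rw [Set.disjoint_left]
    rintro x ⟨_, h1⟩ ⟨h2, _⟩
    linarith
  rw [show Ioc (0:ℝ) (2*Real.pi) = Ioc 0 Real.pi ∪ Ioc Real.pi (2*Real.pi) from
      (Ioc_union_Ioc_eq_Ioc (by linarith) (by linarith)).symm,
    lintegral_union measurableSet_Ioc hdisj]
  have hint1 : IntegrableOn (fun t : ℝ => (t / (2*Real.pi)) ^ (-s)) (Ioc 0 Real.pi) := by
    have h1 : IntegrableOn (fun t : ℝ => t ^ (-s)) (Ioc 0 Real.pi) :=
      (intervalIntegrable_iff_integrableOn_Ioc_of_le hpi.le).mp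
        (intervalIntegral.intervalIntegrable_rpow' (by linarith))
    refine (IntegrableOn.congr_fun (h1.const_mul (((2*Real.pi))⁻¹ ^ (-s))) ?_ measurableSet_Ioc)
    intro t ht
    show (2*Real.pi)⁻¹ ^ (-s) * t ^ (-s) = (t / (2*Real.pi)) ^ (-s)
    rw [div_eq_inv_mul, Real.mul_rpow (by positivity) ht.1.le]
  have hint2 : IntegrableOn (fun t : ℝ => ((2*Real.pi - t) / (2*Real.pi)) ^ (-s))
      (Ioc Real.pi (2*Real.pi)) := by
    have h1 : IntervalIntegrable (fun t : ℝ => t ^ (-s)) volume 0 Real.pi :=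
      intervalIntegral.intervalIntegrable_rpow' (by linarith)
    have h2 := (h1.comp_sub_left (2*Real.pi)).symm
    rw [show 2*Real.pi - Real.pi = Real.pi by ring, show 2*Real.pi - 0 = 2*Real.pi by ring] at h2
    have h3 : IntegrableOn (fun t : ℝ => (2*Real.pi - t) ^ (-s)) (Ioc Real.pi (2*Real.pi)) :=
      (intervalIntegrable_iff_integrableOn_Ioc_of_le (by linarith)).mp h2
    refine (IntegrableOn.congr_fun (h3.const_mul (((2*Real.pi))⁻¹ ^ (-s))) ?_ measurableSet_Ioc)
    intro t ht
    show (2*Real.pi)⁻¹ ^ (-s) * (2*Real.pi - t) ^ (-s) = ((2*Real.pi - t) / (2*Real.pi)) ^ (-s)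
    rw [div_eq_inv_mul, Real.mul_rpow (by positivity) (by linarith [ht.2])]
  have hne : ∀ᵐ x : ℝ ∂volume, x ≠ 2*Real.pi := by
    rw [ae_iff]
    simp only [not_not, setOf_eq_eq_singleton]
    exact Real.volume_singleton
  have e1 : ∫⁻ t in Ioc (0:ℝ) Real.pi, ENNReal.ofReal (min t (2*Real.pi - t) / (2*Real.pi)) ^ (-s)
      = ∫⁻ t in Ioc (0:ℝ) Real.pi, ENNReal.ofReal ((t / (2*Real.pi)) ^ (-s)) := by
    refine setLIntegral_congr_fun_ae measurableSet_Ioc (ae_of_all _ fun t ht => ?_)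
    rw [min_eq_left (by linarith [ht.2]), ENNReal.ofReal_rpow_of_pos (div_pos ht.1 two_pi_pos)]
  have e2 : ∫⁻ t in Ioc Real.pi (2*Real.pi),
        ENNReal.ofReal (min t (2*Real.pi - t) / (2*Real.pi)) ^ (-s)
      = ∫⁻ t in Ioc Real.pi (2*Real.pi),
        ENNReal.ofReal (((2*Real.pi - t) / (2*Real.pi)) ^ (-s)) := by
    refine setLIntegral_congr_fun_ae measurableSet_Ioc ?_
    filter_upwards [hne] with t htne ht
    have h : 0 < (2*Real.pi - t) / (2*Real.pi) := by
      have := lt_of_le_of_ne ht.2 htne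
      have h2 : 0 < 2*Real.pi - t := by linarith
      positivity
    rw [min_eq_right (by linarith [ht.1]), ENNReal.ofReal_rpow_of_pos h]
  rw [e1, e2]
  exact ENNReal.add_lt_top.mpr ⟨hint1.lintegral_lt_top, hint2.lintegral_lt_top⟩

lemma shift_lintegral (f : ℝ → ℝ≥0∞) (hf : Function.Periodic f (2*Real.pi)) (θ b : ℝ) :
    ∫⁻ t in Ioc b (b + 2*Real.pi), f (t - θ) = ∫⁻ t in Ioc 0 (2*Real.pi), f t := by
  haveI : Fact ((0:ℝ) < 2*Real.pi) := ⟨two_pi_pos⟩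
  have hcoe : ∀ x : ℝ, f x = hf.lift (x : AddCircle (2*Real.pi)) := fun x => (hf.lift_coe x).symm
  calc ∫⁻ t in Ioc b (b + 2*Real.pi), f (t - θ)
      = ∫⁻ t in Ioc b (b + 2*Real.pi),
          (fun x : AddCircle (2*Real.pi) => hf.lift (x - ((θ:ℝ) : AddCircle (2*Real.pi))))
            ((t : ℝ) : AddCircle (2*Real.pi)) := by
        refine setLIntegral_congr_fun_ae measurableSet_Ioc (ae_of_all _ fun t _ => ?_)
        simp only
        rw [hcoe (t - θ)]
        norm_cast
    _ = ∫⁻ x : AddCircle (2*Real.pi), hf.lift (x - ((θ:ℝ) : AddCircle (2*Real.pi))) :=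
        AddCircle.lintegral_preimage (2*Real.pi) b
          (fun x : AddCircle (2*Real.pi) => hf.lift (x - ((θ:ℝ) : AddCircle (2*Real.pi))))
    _ = ∫⁻ x : AddCircle (2*Real.pi), hf.lift x := by
        simpa [sub_eq_add_neg] using
          lintegral_add_right_eq_self (μ := volume) hf.lift (-((θ:ℝ) : AddCircle (2*Real.pi)))
    _ = ∫⁻ t in Ioc 0 (0 + 2*Real.pi), hf.lift ((t : ℝ) : AddCircle (2*Real.pi)) :=
        (AddCircle.lintegral_preimage (2*Real.pi) 0 hf.lift).symm
    _ = ∫⁻ t in Ioc 0 (2*Real.pi), f t := by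
        rw [zero_add]
        exact setLIntegral_congr_fun_ae measurableSet_Ioc (ae_of_all _ fun t _ => (hcoe t).symm)

lemma core {ζ : ℂ} (hζ : ‖ζ‖ = 1) (s b : ℝ) :
    ∫⁻ t in Ioc b (b + 2*Real.pi), ENNReal.ofReal (‖cpt t - ζ‖ / 2) ^ (-s) = Es s := by
  obtain ⟨θ, hθ⟩ : ∃ θ : ℝ, cpt θ = ζ := by
    refine ⟨ζ.arg, ?_⟩
    have h1 := Complex.norm_mul_exp_arg_mul_I ζ
    rw [hζ] at h1
    simpa [cpt] using h1
  have hper : Function.Periodic (fun u => ENNReal.ofReal (‖cpt u - 1‖/2) ^ (-s)) (2*Real.pi) :=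
    fun u => by simp only [cpt_per]
  calc ∫⁻ t in Ioc b (b + 2*Real.pi), ENNReal.ofReal (‖cpt t - ζ‖ / 2) ^ (-s)
      = ∫⁻ t in Ioc b (b + 2*Real.pi),
          (fun u => ENNReal.ofReal (‖cpt u - 1‖/2) ^ (-s)) (t - θ) := by
        refine setLIntegral_congr_fun_ae measurableSet_Ioc (ae_of_all _ fun t _ => ?_)
        simp only
        rw [← hθ, cpt_sub, norm_mul, norm_cpt, one_mul]
    _ = Es s := shift_lintegral _ hper θ b

/-- radial projection to the circle -/
def zeta (z : ℂ) : ℂ := if z = 0 then 1 else (‖z‖ : ℂ)⁻¹ * z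

lemma norm_zeta (z : ℂ) : ‖zeta z‖ = 1 := by
  rw [zeta]
  split_ifs with h
  · simp
  · rw [norm_mul, norm_inv, Complex.norm_real, norm_norm,
      inv_mul_cancel₀ (norm_ne_zero_iff.mpr h)]

lemma zeta_spec (z : ℂ) : z = (‖z‖ : ℂ) * zeta z := by
  rw [zeta]
  split_ifs with h
  · simp [h]
  · rw [← mul_assoc, mul_inv_cancel₀ (by exact_mod_cast norm_ne_zero_iff.mpr h), one_mul]

lemma rpow_mul_rpow_le_max {A B a : ℝ} (hA : 0 ≤ A) (hB : 0 ≤ B) (ha : 0 ≤ a) (ha1 : a ≤ 1) :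
    A ^ a * B ^ (1 - a) ≤ max A B := by
  rcases le_total A B with h | h
  · calc A ^ a * B ^ (1-a) ≤ B ^ a * B ^ (1-a) :=
        mul_le_mul_of_nonneg_right (Real.rpow_le_rpow hA h ha) (Real.rpow_nonneg hB _)
    _ = B ^ (a + (1-a)) := (Real.rpow_add' hB (by norm_num)).symm
    _ = B := by rw [show a + (1-a) = 1 by ring, Real.rpow_one]
    _ ≤ max A B := le_max_right _ _
  · calc A ^ a * B ^ (1-a) ≤ A ^ a * A ^ (1-a) :=
        mul_le_mul_of_nonneg_left (Real.rpow_le_rpow hB h (by linarith)) (Real.rpow_nonneg hA _)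
    _ = A ^ (a + (1-a)) := (Real.rpow_add' hA (by norm_num)).symm
    _ = A := by rw [show a + (1-a) = 1 by ring, Real.rpow_one]
    _ ≤ max A B := le_max_left _ _

lemma geo {w z : ℂ} (hw : ‖w‖ = 1) (hz : ‖z‖ < 1) {a : ℝ} (ha : 0 ≤ a) (ha1 : a ≤ 1) :
    (1 - ‖z‖) ^ a * (‖w - zeta z‖ / 2) ^ (1 - a) ≤ ‖w - z‖ := by
  have h1 : 1 - ‖z‖ ≤ ‖w - z‖ := by
    have := norm_sub_norm_le w z; rw [hw] at this; linarith
  have hζz : ‖zeta z - z‖ = 1 - ‖z‖ := by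
    nth_rewrite 2 [zeta_spec z]
    rw [show zeta z - (‖z‖ : ℂ) * zeta z = ((1:ℂ) - (‖z‖:ℂ)) * zeta z by ring,
      norm_mul, norm_zeta, mul_one,
      show ((1:ℂ) - (‖z‖:ℂ)) = ((1 - ‖z‖ : ℝ) : ℂ) by push_cast; ring,
      Complex.norm_real, Real.norm_of_nonneg (by linarith)]
  have h2 : ‖w - zeta z‖ / 2 ≤ ‖w - z‖ := by
    have h3 : ‖w - zeta z‖ ≤ ‖w - z‖ + ‖zeta z - z‖ := by
      calc ‖w - zeta z‖ = ‖(w - z) - (zeta z - z)‖ := by rw [sub_sub_sub_cancel_right]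
        _ ≤ ‖w - z‖ + ‖zeta z - z‖ := norm_sub_le _ _
    rw [hζz] at h3; linarith
  calc (1 - ‖z‖) ^ a * (‖w - zeta z‖ / 2) ^ (1 - a)
      ≤ max (1 - ‖z‖) (‖w - zeta z‖ / 2) :=
        rpow_mul_rpow_le_max (by linarith) (by positivity) ha ha1
    _ ≤ ‖w - z‖ := max_le h1 h2

lemma kernel_bound {z : ℂ} (hz : ‖z‖ < 1) {w : ℂ} (hw : ‖w‖ = 1) {a : ℝ}
    (ha : 0 < a) (ha1 : a < 1) :
    (ENNReal.ofReal ‖w - z‖)⁻¹ ≤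
      ENNReal.ofReal (1 - ‖z‖) ^ (-a) * ENNReal.ofReal (‖w - zeta z‖ / 2) ^ (-(1 - a)) := by
  have hr : (0:ℝ) < 1 - ‖z‖ := by linarith
  have key := geo hw hz ha.le ha1.le
  have h2 : ENNReal.ofReal (1-‖z‖) ^ a * ENNReal.ofReal (‖w - zeta z‖/2) ^ (1-a)
      ≤ ENNReal.ofReal ‖w - z‖ := by
    rw [ENNReal.ofReal_rpow_of_nonneg hr.le ha.le,
      ENNReal.ofReal_rpow_of_nonneg (by positivity) (by linarith),
      ← ENNReal.ofReal_mul (by positivity)]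
    exact ENNReal.ofReal_le_ofReal key
  rw [ENNReal.rpow_neg, ENNReal.rpow_neg, ← ENNReal.mul_inv]
  · exact ENNReal.inv_le_inv.mpr h2
  · left
    exact (ENNReal.rpow_pos (ENNReal.ofReal_pos.mpr hr) ENNReal.ofReal_ne_top).ne'
  · left
    exact ENNReal.rpow_ne_top_of_nonneg ha.le ENNReal.ofReal_ne_top

section Polar

open Real

lemma lintegral_comp_polarCoord_symm (f : ℝ × ℝ → ℝ≥0∞) :
    ∫⁻ p in polarCoord.target, ENNReal.ofReal p.1 * f (polarCoord.symm p) = ∫⁻ p, f p := by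
  set B : ℝ × ℝ → ℝ × ℝ →L[ℝ] ℝ × ℝ := fun p =>
    LinearMap.toContinuousLinearMap (Matrix.toLin (Module.Basis.finTwoProd ℝ) (Module.Basis.finTwoProd ℝ)
      !![cos p.2, -p.1 * sin p.2; sin p.2, p.1 * cos p.2]) with hB
  have B_det : ∀ p, (B p).det = p.1 := by
    intro p
    conv_rhs => rw [← one_mul p.1, ← cos_sq_add_sin_sq p.2]
    simp only [hB, neg_mul, LinearMap.det_toContinuousLinearMap, LinearMap.det_toLin,
      Matrix.det_fin_two_of, sub_neg_eq_add]
    ring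
  have hinj : InjOn polarCoord.symm polarCoord.target := by
    have := polarCoord.symm.injOn
    rwa [OpenPartialHomeomorph.symm_source] at this
  symm
  calc ∫⁻ p, f p = ∫⁻ p in polarCoord.source, f p := by
        rw [← setLIntegral_univ]
        exact setLIntegral_congr polarCoord_source_ae_eq_univ.symm
    _ = ∫⁻ p in polarCoord.symm '' polarCoord.target, f p := by
        rw [polarCoord.symm_image_target_eq_source]
    _ = ∫⁻ p in polarCoord.target, ENNReal.ofReal |(B p).det| * f (polarCoord.symm p) :=
        lintegral_image_eq_lintegral_abs_det_fderiv_mul volume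
          polarCoord.open_target.measurableSet
          (fun p _ => (hasFDerivAt_polarCoord_symm p).hasFDerivWithinAt) hinj f
    _ = ∫⁻ p in polarCoord.target, ENNReal.ofReal p.1 * f (polarCoord.symm p) := by
        refine setLIntegral_congr_fun_ae polarCoord.open_target.measurableSet
          (ae_of_all _ fun p hp => ?_)
        rw [B_det, abs_of_pos hp.1]

lemma complex_lintegral_polar (f : ℂ → ℝ≥0∞) :
    ∫⁻ p in polarCoord.target, ENNReal.ofReal p.1 * f (Complex.polarCoord.symm p)
      = ∫⁻ z, f z := by
  rw [← (Complex.volume_preserving_equiv_real_prod.symm).lintegral_comp_emb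
    Complex.measurableEquivRealProd.symm.measurableEmbedding f,
    ← lintegral_comp_polarCoord_symm]
  rfl

lemma lintegral_ball_polar (f : ℂ → ℝ≥0∞) :
    ∫⁻ z in ball (0:ℂ) 1, f z
      = ∫⁻ p in polarCoord.target,
          ENNReal.ofReal p.1 * (ball (0:ℂ) 1).indicator f (Complex.polarCoord.symm p) := by
  rw [← lintegral_indicator measurableSet_ball, ← complex_lintegral_polar]

end Polar

/-- radial constant -/
def Ur : ℝ≥0∞ := ∫⁻ ρ in Ioo (0:ℝ) 1, ENNReal.ofReal (1 - ρ) ^ (-(1/2) : ℝ)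

lemma Ur_lt_top : Ur < ⊤ := by
  have h1 : IntervalIntegrable (fun t : ℝ => t ^ (-(1/2) : ℝ)) volume 0 1 :=
    intervalIntegral.intervalIntegrable_rpow' (by norm_num)
  have h2 := (h1.comp_sub_left 1).symm
  norm_num at h2
  have h3 : IntegrableOn (fun t : ℝ => (1 - t) ^ (-(1/2) : ℝ)) (Ioo (0:ℝ) 1) := by
    have := (intervalIntegrable_iff_integrableOn_Ioc_of_le (by norm_num : (0:ℝ) ≤ 1)).mp h2
    exact this.mono_set Ioo_subset_Ioc_self
  have e1 : Ur = ∫⁻ ρ in Ioo (0:ℝ) 1, ENNReal.ofReal ((1 - ρ) ^ (-(1/2) : ℝ)) := by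
    refine setLIntegral_congr_fun_ae measurableSet_Ioo (ae_of_all _ fun ρ hρ => ?_)
    rw [ENNReal.ofReal_rpow_of_pos (by linarith [hρ.2])]
  rw [e1]
  exact h3.lintegral_lt_top

lemma zeta_polar {ρ φ : ℝ} (hρ : 0 < ρ) :
    zeta (Complex.polarCoord.symm (ρ, φ)) = cpt φ := by
  have hz : Complex.polarCoord.symm (ρ, φ)
      = (ρ:ℂ) * ((Real.cos φ : ℂ) + (Real.sin φ : ℂ) * Complex.I) :=
    Complex.polarCoord_symm_apply (ρ, φ)
  have hcpt : cpt φ = (Real.cos φ : ℂ) + (Real.sin φ : ℂ) * Complex.I := by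
    rw [cpt, Complex.exp_mul_I, Complex.ofReal_cos, Complex.ofReal_sin]
  have hnorm : ‖Complex.polarCoord.symm (ρ, φ)‖ = ρ := by
    rw [Complex.norm_polarCoord_symm]
    exact abs_of_pos hρ
  have hne : Complex.polarCoord.symm (ρ, φ) ≠ 0 := by
    intro h
    rw [h, norm_zero] at hnorm
    exact hρ.ne hnorm
  rw [zeta, if_neg hne, hnorm, hz, ← mul_assoc,
    inv_mul_cancel₀ (by exact_mod_cast hρ.ne'), one_mul, hcpt]

lemma norm_polar {ρ φ : ℝ} (hρ : 0 < ρ) : ‖Complex.polarCoord.symm (ρ, φ)‖ = ρ := by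
  rw [Complex.norm_polarCoord_symm]
  exact abs_of_pos hρ

lemma lemmaB {a c : ℝ} (ha : 0 < a) (ha1 : a < 1) (hc : 0 ≤ c) (hca : c + a = 1/2) (t : ℝ) :
    ∫⁻ z in ball (0:ℂ) 1,
        ENNReal.ofReal (1 - ‖z‖) ^ (-c) * (ENNReal.ofReal ‖cpt t - z‖)⁻¹
      ≤ Ur * Es (1 - a) := by
  set G : ℂ → ℝ≥0∞ := fun z =>
    ENNReal.ofReal (1 - ‖z‖) ^ (-(1/2) : ℝ)
      * ENNReal.ofReal (‖cpt t - zeta z‖ / 2) ^ (-(1 - a)) with hG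
  have h1 : ∀ z ∈ ball (0:ℂ) 1,
      ENNReal.ofReal (1 - ‖z‖) ^ (-c) * (ENNReal.ofReal ‖cpt t - z‖)⁻¹ ≤ G z := by
    intro z hz
    rw [mem_ball_zero_iff] at hz
    have hr : (0:ℝ) < 1 - ‖z‖ := by linarith
    calc ENNReal.ofReal (1 - ‖z‖) ^ (-c) * (ENNReal.ofReal ‖cpt t - z‖)⁻¹
        ≤ ENNReal.ofReal (1 - ‖z‖) ^ (-c) *
            (ENNReal.ofReal (1 - ‖z‖) ^ (-a)
              * ENNReal.ofReal (‖cpt t - zeta z‖ / 2) ^ (-(1 - a))) := by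
          gcongr
          exact kernel_bound hz (norm_cpt t) ha ha1
      _ = (ENNReal.ofReal (1 - ‖z‖) ^ (-c) * ENNReal.ofReal (1 - ‖z‖) ^ (-a))
            * ENNReal.ofReal (‖cpt t - zeta z‖ / 2) ^ (-(1 - a)) := by ring
      _ = G z := by
          rw [hG, ← ENNReal.rpow_add _ _ (ENNReal.ofReal_pos.mpr hr).ne' ENNReal.ofReal_ne_top,
            show -c + -a = -(1/2 : ℝ) by linarith]
  refine le_trans (setLIntegral_mono' measurableSet_ball h1) ?_
  rw [lintegral_ball_polar G]
  have h2 : ∀ p ∈ polarCoord.target,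
      ENNReal.ofReal p.1 * (ball (0:ℂ) 1).indicator G (Complex.polarCoord.symm p)
        ≤ (Ioo (0:ℝ) 1).indicator (fun ρ => ENNReal.ofReal (1-ρ) ^ (-(1/2) : ℝ)) p.1
            * ENNReal.ofReal (‖cpt p.2 - cpt t‖ / 2) ^ (-(1 - a)) := by
    rintro ⟨ρ, φ⟩ hp
    have hρ : 0 < ρ := hp.1
    rcases lt_or_ge ρ 1 with h | h
    · have hmem : Complex.polarCoord.symm (ρ,φ) ∈ ball (0:ℂ) 1 := by
        rw [mem_ball_zero_iff, norm_polar hρ]; exact h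
      rw [indicator_of_mem hmem,
        indicator_of_mem (show ρ ∈ Ioo (0:ℝ) 1 from ⟨hρ, h⟩)]
      rw [hG]
      simp only
      rw [norm_polar hρ, zeta_polar hρ, norm_sub_rev]
      calc ENNReal.ofReal ρ *
            (ENNReal.ofReal (1-ρ) ^ (-(1/2) : ℝ)
              * ENNReal.ofReal (‖cpt φ - cpt t‖ / 2) ^ (-(1 - a)))
          ≤ 1 * (ENNReal.ofReal (1-ρ) ^ (-(1/2) : ℝ)
              * ENNReal.ofReal (‖cpt φ - cpt t‖ / 2) ^ (-(1 - a))) := by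
            gcongr
            exact ENNReal.ofReal_le_one.mpr h.le
        _ = ENNReal.ofReal (1-ρ) ^ (-(1/2) : ℝ)
              * ENNReal.ofReal (‖cpt φ - cpt t‖ / 2) ^ (-(1 - a)) := one_mul _
    · have hnmem : Complex.polarCoord.symm (ρ,φ) ∉ ball (0:ℂ) 1 := by
        rw [mem_ball_zero_iff, norm_polar hρ]
        exact not_lt.mpr h
      rw [indicator_of_notMem hnmem, mul_zero]
      exact zero_le
  refine le_trans (setLIntegral_mono' polarCoord.open_target.measurableSet h2) ?_
  have htarget : polarCoord.target = Ioi (0:ℝ) ×ˢ Ioo (-Real.pi) Real.pi := rfl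
  rw [htarget]
  have hmeas1 : Measurable fun ρ : ℝ =>
      (Ioo (0:ℝ) 1).indicator (fun ρ => ENNReal.ofReal (1-ρ) ^ (-(1/2) : ℝ)) ρ := by
    refine Measurable.indicator ?_ measurableSet_Ioo
    exact (ENNReal.measurable_ofReal.comp (measurable_const.sub measurable_id)).pow_const _
  have hmeas2 : Measurable fun φ : ℝ =>
      ENNReal.ofReal (‖cpt φ - cpt t‖ / 2) ^ (-(1 - a)) := by
    have hc : Continuous fun φ : ℝ => ‖cpt φ - cpt t‖ / 2 := by
      unfold cpt
      fun_prop
    exact (ENNReal.measurable_ofReal.comp hc.measurable).pow_const _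
  rw [Measure.volume_eq_prod, ← Measure.prod_restrict,
    lintegral_prod_mul hmeas1.aemeasurable hmeas2.aemeasurable]
  have hfst : ∫⁻ ρ in Ioi (0:ℝ),
      (Ioo (0:ℝ) 1).indicator (fun ρ => ENNReal.ofReal (1-ρ) ^ (-(1/2) : ℝ)) ρ = Ur := by
    rw [lintegral_indicator measurableSet_Ioo, Measure.restrict_restrict measurableSet_Ioo,
      inter_eq_self_of_subset_left (fun x hx => hx.1)]
    rfl
  have hsnd : ∫⁻ φ in Ioo (-Real.pi) Real.pi,
      ENNReal.ofReal (‖cpt φ - cpt t‖ / 2) ^ (-(1 - a)) = Es (1 - a) := by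
    rw [setLIntegral_congr Ioo_ae_eq_Ioc]
    have := core (norm_cpt t) (1 - a) (-Real.pi)
    rw [show -Real.pi + 2*Real.pi = Real.pi by ring] at this
    exact this
  rw [hfst, hsnd]

lemma measurable_cptsub (z : ℂ) : Measurable fun t : ℝ => (ENNReal.ofReal ‖cpt t - z‖)⁻¹ := by
  have hc : Continuous fun t : ℝ => ‖cpt t - z‖ := by
    unfold cpt; fun_prop
  exact (ENNReal.measurable_ofReal.comp hc.measurable).inv

lemma norm_cpt_sub_pos {z : ℂ} (hz : ‖z‖ < 1) (t : ℝ) : 0 < ‖cpt t - z‖ := by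
  have := norm_sub_norm_le (cpt t) z
  rw [norm_cpt] at this
  linarith

/-- The main estimate, for measurable integrands. -/
lemma mainBound {p a : ℝ} (hp : 1 < p) (hap : a = 1/(2*p)) (g : ℝ → ℂ) (hg : Measurable g) :
    ∫⁻ z in ball (0:ℂ) 1, ENNReal.ofReal ‖Aop g z‖ ^ p
      ≤ ((2:ℝ≥0∞) ^ p * Es (1-a) ^ (p-1) * (Ur * Es (1-a)))
          * ∫⁻ t in Ioc 0 (2*Real.pi), ENNReal.ofReal ‖g t‖ ^ p := by
  have hp0 : (0:ℝ) < p := by linarith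
  have ha : 0 < a := by rw [hap]; positivity
  have ha1 : a < 1 := by
    rw [hap]
    rw [div_lt_one (by positivity)]
    linarith
  have hc : (0:ℝ) ≤ a * (p-1) := mul_nonneg ha.le (by linarith)
  have hca : a * (p-1) + a = 1/2 := by
    rw [hap]; field_simp; ring
  set c : ℝ := a * (p-1) with hcdef
  set q : ℝ := p.conjExponent with hq
  have hpq : p.HolderConjugate q := Real.HolderConjugate.conjExponent hp
  have hq1 : (1/q) * p = p - 1 := by
    rw [hq, Real.conjExponent]
    field_simp
  have hip : (1/p) * p = 1 := by field_simp
  have hKfin : ∀ z ∈ ball (0:ℂ) 1, ∀ t : ℝ,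
      (ENNReal.ofReal ‖cpt t - z‖)⁻¹ ≠ 0 ∧ (ENNReal.ofReal ‖cpt t - z‖)⁻¹ ≠ ⊤ := by
    intro z hz t
    rw [mem_ball_zero_iff] at hz
    constructor
    · simp [ENNReal.ofReal_ne_top]
    · rw [ENNReal.inv_ne_top]
      exact (ENNReal.ofReal_pos.mpr (norm_cpt_sub_pos hz t)).ne'
  -- Step 1+2+3 : pointwise bound in z
  have step : ∀ z ∈ ball (0:ℂ) 1,
      ENNReal.ofReal ‖Aop g z‖ ^ p
        ≤ ((2:ℝ≥0∞)^p * Es (1-a) ^ (p-1)) *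
            (ENNReal.ofReal (1-‖z‖) ^ (-c) *
              ∫⁻ t in Ioc 0 (2*Real.pi),
                (ENNReal.ofReal ‖cpt t - z‖)⁻¹ * ENNReal.ofReal ‖g t‖ ^ p) := by
    intro z hzball
    have hz : ‖z‖ < 1 := mem_ball_zero_iff.mp hzball
    have hr : (0:ℝ) < 1 - ‖z‖ := by linarith
    -- step 1
    have step1 : ENNReal.ofReal ‖Aop g z‖
        ≤ 2 * ∫⁻ t in Ioc 0 (2*Real.pi),
            (ENNReal.ofReal ‖cpt t - z‖)⁻¹ * ENNReal.ofReal ‖g t‖ := by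
      have e0 : Aop g z = ∫ t in Ioc (0:ℝ) (2*Real.pi), (cpt t + z) / (cpt t - z) * g t := by
        rw [Aop, intervalIntegral.integral_of_le two_pi_pos.le]
        rfl
      rw [e0, ofReal_norm]
      refine le_trans (enorm_integral_le_lintegral_enorm _) ?_
      rw [← lintegral_const_mul' _ _ (by norm_num : (2:ℝ≥0∞) ≠ ⊤)]
      refine lintegral_mono fun t => ?_
      rw [← ofReal_norm, norm_mul, norm_div,
        ENNReal.ofReal_mul (by positivity), ENNReal.ofReal_div_of_pos (norm_cpt_sub_pos hz t),
        div_eq_mul_inv]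
      calc ENNReal.ofReal ‖cpt t + z‖ * (ENNReal.ofReal ‖cpt t - z‖)⁻¹ * ENNReal.ofReal ‖g t‖
          ≤ 2 * (ENNReal.ofReal ‖cpt t - z‖)⁻¹ * ENNReal.ofReal ‖g t‖ := by
            have hb2 : ENNReal.ofReal ‖cpt t + z‖ ≤ 2 := by
              rw [show (2:ℝ≥0∞) = ENNReal.ofReal 2 by norm_num]
              refine ENNReal.ofReal_le_ofReal ?_
              calc ‖cpt t + z‖ ≤ ‖cpt t‖ + ‖z‖ := norm_add_le _ _
                _ ≤ 2 := by rw [norm_cpt]; linarith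
            gcongr
        _ = 2 * ((ENNReal.ofReal ‖cpt t - z‖)⁻¹ * ENNReal.ofReal ‖g t‖) := by ring
    -- step 2 : Hölder
    have step2 : ∫⁻ t in Ioc 0 (2*Real.pi),
          (ENNReal.ofReal ‖cpt t - z‖)⁻¹ * ENNReal.ofReal ‖g t‖
        ≤ (∫⁻ t in Ioc 0 (2*Real.pi),
              (ENNReal.ofReal ‖cpt t - z‖)⁻¹ * ENNReal.ofReal ‖g t‖ ^ p) ^ (1/p)
            * (∫⁻ t in Ioc 0 (2*Real.pi), (ENNReal.ofReal ‖cpt t - z‖)⁻¹) ^ (1/q) := by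
      set K : ℝ → ℝ≥0∞ := fun t => (ENNReal.ofReal ‖cpt t - z‖)⁻¹ with hK
      set N : ℝ → ℝ≥0∞ := fun t => ENNReal.ofReal ‖g t‖ with hN
      have hmK : Measurable K := measurable_cptsub z
      have hmN : Measurable N := ENNReal.measurable_ofReal.comp hg.norm
      have happ := ENNReal.lintegral_mul_le_Lp_mul_Lq
        (volume.restrict (Ioc 0 (2*Real.pi))) hpq
        (f := fun t => K t ^ (1/p) * N t)
        (g := fun t => K t ^ (1/q))
        (((hmK.pow_const _).mul hmN).aemeasurable) ((hmK.pow_const _).aemeasurable)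
      have e1 : ∀ t, (fun t => K t ^ (1/p) * N t) t * (fun t => K t ^ (1/q)) t = K t * N t := by
        intro t
        have h0 := hKfin z hzball t
        calc K t ^ (1/p) * N t * K t ^ (1/q) = K t ^ (1/p) * K t ^ (1/q) * N t := by ring
          _ = K t ^ (1/p + 1/q) * N t := by
              rw [ENNReal.rpow_add _ _ h0.1 h0.2]
          _ = K t * N t := by
              rw [show 1/p + 1/q = 1 by
                  rw [one_div, one_div]; exact hpq.inv_add_inv_eq_one, ENNReal.rpow_one]
      have e2 : ∀ t, ((fun t => K t ^ (1/p) * N t) t) ^ p = K t * N t ^ p := by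
        intro t
        rw [ENNReal.mul_rpow_of_nonneg _ _ hp0.le, ← ENNReal.rpow_mul, hip, ENNReal.rpow_one]
      have e3 : ∀ t, ((fun t => K t ^ (1/q)) t) ^ q = K t := by
        intro t
        rw [← ENNReal.rpow_mul, one_div, inv_mul_cancel₀ hpq.symm.ne_zero, ENNReal.rpow_one]
      calc ∫⁻ t in Ioc 0 (2*Real.pi), K t * N t
          = ∫⁻ t in Ioc 0 (2*Real.pi),
              (fun t => K t ^ (1/p) * N t) t * (fun t => K t ^ (1/q)) t := by
            refine lintegral_congr fun t => (e1 t).symm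
        _ ≤ (∫⁻ t in Ioc 0 (2*Real.pi), ((fun t => K t ^ (1/p) * N t) t) ^ p) ^ (1/p)
              * (∫⁻ t in Ioc 0 (2*Real.pi), ((fun t => K t ^ (1/q)) t) ^ q) ^ (1/q) := happ
        _ = (∫⁻ t in Ioc 0 (2*Real.pi), K t * N t ^ p) ^ (1/p)
              * (∫⁻ t in Ioc 0 (2*Real.pi), K t) ^ (1/q) := by
            rw [lintegral_congr e2, lintegral_congr e3]
    -- step 3 : lemma A
    have stepA : ∫⁻ t in Ioc 0 (2*Real.pi), (ENNReal.ofReal ‖cpt t - z‖)⁻¹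
        ≤ ENNReal.ofReal (1-‖z‖) ^ (-a) * Es (1-a) := by
      calc ∫⁻ t in Ioc 0 (2*Real.pi), (ENNReal.ofReal ‖cpt t - z‖)⁻¹
          ≤ ∫⁻ t in Ioc 0 (2*Real.pi),
              ENNReal.ofReal (1-‖z‖) ^ (-a) * ENNReal.ofReal (‖cpt t - zeta z‖ / 2) ^ (-(1-a)) :=
            lintegral_mono fun t => kernel_bound hz (norm_cpt t) ha ha1
        _ = ENNReal.ofReal (1-‖z‖) ^ (-a)
              * ∫⁻ t in Ioc 0 (2*Real.pi), ENNReal.ofReal (‖cpt t - zeta z‖ / 2) ^ (-(1-a)) := by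
            refine lintegral_const_mul' _ _ ?_
            rw [ENNReal.ofReal_rpow_of_pos hr]
            exact ENNReal.ofReal_ne_top
        _ = ENNReal.ofReal (1-‖z‖) ^ (-a) * Es (1-a) := by
            congr 1
            have := core (norm_zeta z) (1-a) 0
            rw [zero_add] at this
            exact this
    -- combine
    calc ENNReal.ofReal ‖Aop g z‖ ^ p
        ≤ (2 * ((∫⁻ t in Ioc 0 (2*Real.pi),
              (ENNReal.ofReal ‖cpt t - z‖)⁻¹ * ENNReal.ofReal ‖g t‖ ^ p) ^ (1/p)
            * (∫⁻ t in Ioc 0 (2*Real.pi), (ENNReal.ofReal ‖cpt t - z‖)⁻¹) ^ (1/q))) ^ p := by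
          refine ENNReal.rpow_le_rpow ?_ hp0.le
          exact le_trans step1 (mul_le_mul_right step2 2)
      _ = (2:ℝ≥0∞)^p * (∫⁻ t in Ioc 0 (2*Real.pi),
              (ENNReal.ofReal ‖cpt t - z‖)⁻¹ * ENNReal.ofReal ‖g t‖ ^ p)
            * ((∫⁻ t in Ioc 0 (2*Real.pi), (ENNReal.ofReal ‖cpt t - z‖)⁻¹) ^ (1/q)) ^ p := by
          rw [ENNReal.mul_rpow_of_nonneg _ _ hp0.le, ENNReal.mul_rpow_of_nonneg _ _ hp0.le,
            ← ENNReal.rpow_mul, hip, ENNReal.rpow_one, mul_assoc]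
      _ ≤ (2:ℝ≥0∞)^p * (∫⁻ t in Ioc 0 (2*Real.pi),
              (ENNReal.ofReal ‖cpt t - z‖)⁻¹ * ENNReal.ofReal ‖g t‖ ^ p)
            * (ENNReal.ofReal (1-‖z‖) ^ (-a) * Es (1-a)) ^ ((1/q) * p) := by
          rw [ENNReal.rpow_mul]
          have hqnn : (0:ℝ) ≤ 1/q := by
            have := hpq.symm.pos
            positivity
          exact mul_le_mul_right
            (ENNReal.rpow_le_rpow (ENNReal.rpow_le_rpow stepA hqnn) hp0.le) _
      _ = ((2:ℝ≥0∞)^p * Es (1-a) ^ (p-1)) *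
            (ENNReal.ofReal (1-‖z‖) ^ (-c) *
              ∫⁻ t in Ioc 0 (2*Real.pi),
                (ENNReal.ofReal ‖cpt t - z‖)⁻¹ * ENNReal.ofReal ‖g t‖ ^ p) := by
          rw [hq1, ENNReal.mul_rpow_of_nonneg _ _ (by linarith : (0:ℝ) ≤ p - 1),
            ← ENNReal.rpow_mul, show -a * (p-1) = -c by rw [hcdef]; ring]
          ring
  -- integrate over the ball and swap
  have hconst_ne_top : (2:ℝ≥0∞)^p * Es (1-a) ^ (p-1) ≠ ⊤ := by
    refine ENNReal.mul_ne_top ?_ ?_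
    · exact ENNReal.rpow_ne_top_of_nonneg hp0.le (by norm_num)
    · exact ENNReal.rpow_ne_top_of_nonneg (by linarith) (Es_lt_top (by linarith) (by linarith)).ne
  calc ∫⁻ z in ball (0:ℂ) 1, ENNReal.ofReal ‖Aop g z‖ ^ p
      ≤ ∫⁻ z in ball (0:ℂ) 1, ((2:ℝ≥0∞)^p * Es (1-a) ^ (p-1)) *
            (ENNReal.ofReal (1-‖z‖) ^ (-c) *
              ∫⁻ t in Ioc 0 (2*Real.pi),
                (ENNReal.ofReal ‖cpt t - z‖)⁻¹ * ENNReal.ofReal ‖g t‖ ^ p) := by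
        exact setLIntegral_mono' measurableSet_ball step
    _ = ((2:ℝ≥0∞)^p * Es (1-a) ^ (p-1)) * ∫⁻ z in ball (0:ℂ) 1,
            ENNReal.ofReal (1-‖z‖) ^ (-c) *
              ∫⁻ t in Ioc 0 (2*Real.pi),
                (ENNReal.ofReal ‖cpt t - z‖)⁻¹ * ENNReal.ofReal ‖g t‖ ^ p :=
        lintegral_const_mul' _ _ hconst_ne_top
    _ = ((2:ℝ≥0∞)^p * Es (1-a) ^ (p-1)) * ∫⁻ z in ball (0:ℂ) 1,
            ∫⁻ t in Ioc 0 (2*Real.pi),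
              ENNReal.ofReal (1-‖z‖) ^ (-c) *
                ((ENNReal.ofReal ‖cpt t - z‖)⁻¹ * ENNReal.ofReal ‖g t‖ ^ p) := by
        congr 1
        refine setLIntegral_congr_fun_ae measurableSet_ball (ae_of_all _ fun z hz => ?_)
        rw [mem_ball_zero_iff] at hz
        refine (lintegral_const_mul' _ _ ?_).symm
        rw [ENNReal.ofReal_rpow_of_pos (by linarith)]
        exact ENNReal.ofReal_ne_top
    _ = ((2:ℝ≥0∞)^p * Es (1-a) ^ (p-1)) * ∫⁻ t in Ioc 0 (2*Real.pi),
            ∫⁻ z in ball (0:ℂ) 1,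
              ENNReal.ofReal (1-‖z‖) ^ (-c) *
                ((ENNReal.ofReal ‖cpt t - z‖)⁻¹ * ENNReal.ofReal ‖g t‖ ^ p) := by
        congr 1
        refine lintegral_lintegral_swap ?_
        have hm : Measurable fun zt : ℂ × ℝ =>
            ENNReal.ofReal (1-‖zt.1‖) ^ (-c) *
              ((ENNReal.ofReal ‖cpt zt.2 - zt.1‖)⁻¹ * ENNReal.ofReal ‖g zt.2‖ ^ p) := by
          have hm1 : Measurable fun zt : ℂ × ℝ => ENNReal.ofReal (1-‖zt.1‖) ^ (-c) :=
            (ENNReal.measurable_ofReal.comp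
              (measurable_const.sub measurable_fst.norm)).pow_const _
          have hc2 : Continuous fun zt : ℂ × ℝ => ‖cpt zt.2 - zt.1‖ := by
            unfold cpt; fun_prop
          have hm2 : Measurable fun zt : ℂ × ℝ => (ENNReal.ofReal ‖cpt zt.2 - zt.1‖)⁻¹ :=
            (ENNReal.measurable_ofReal.comp hc2.measurable).inv
          have hm3 : Measurable fun zt : ℂ × ℝ => ENNReal.ofReal ‖g zt.2‖ ^ p :=
            ((ENNReal.measurable_ofReal.comp (hg.norm.comp measurable_snd)).pow_const _)
          exact hm1.mul (hm2.mul hm3)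
        exact hm.aemeasurable
    _ ≤ ((2:ℝ≥0∞)^p * Es (1-a) ^ (p-1)) * ∫⁻ t in Ioc 0 (2*Real.pi),
            (Ur * Es (1-a)) * ENNReal.ofReal ‖g t‖ ^ p := by
        gcongr with t
        calc ∫⁻ z in ball (0:ℂ) 1,
              ENNReal.ofReal (1-‖z‖) ^ (-c) *
                ((ENNReal.ofReal ‖cpt t - z‖)⁻¹ * ENNReal.ofReal ‖g t‖ ^ p)
            = (∫⁻ z in ball (0:ℂ) 1,
                ENNReal.ofReal (1-‖z‖) ^ (-c) * (ENNReal.ofReal ‖cpt t - z‖)⁻¹)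
                  * ENNReal.ofReal ‖g t‖ ^ p := by
              rw [← lintegral_mul_const' _ _
                (ENNReal.rpow_ne_top_of_nonneg hp0.le ENNReal.ofReal_ne_top)]
              refine lintegral_congr fun z => by ring
          _ ≤ (Ur * Es (1-a)) * ENNReal.ofReal ‖g t‖ ^ p := by
              gcongr
              exact lemmaB ha ha1 hc hca t
    _ = ((2:ℝ≥0∞)^p * Es (1-a) ^ (p-1)) * ((Ur * Es (1-a)) *
            ∫⁻ t in Ioc 0 (2*Real.pi), ENNReal.ofReal ‖g t‖ ^ p) := by
        congr 1
        refine lintegral_const_mul' _ _ ?_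
        exact ENNReal.mul_ne_top Ur_lt_top.ne
          (Es_lt_top (by linarith) (by linarith)).ne
    _ = ((2:ℝ≥0∞) ^ p * Es (1-a) ^ (p-1) * (Ur * Es (1-a)))
          * ∫⁻ t in Ioc 0 (2*Real.pi), ENNReal.ofReal ‖g t‖ ^ p := by ring

end Statement0Aux

open Statement0Aux in
/-- for `0 < σ ≤ 1` and `1/σ < p < ∞` there is a constant `C = C(p)` such that
for every `g ∈ L^p(𝕋)`, `‖A(g)‖_{L^p(𝔻)} ≤ C ‖g‖_{L^p(𝕋)}`. -/
theorem statement0 (p : ℝ)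
    (hp : ∃ σ : ℝ, 0 < σ ∧ σ ≤ 1 ∧ 1 / σ < p) :
    ∃ C : ℝ, 0 < C ∧ ∀ g : ℝ → ℂ, Function.Periodic g (2 * Real.pi) →
      MemLp g (ENNReal.ofReal p) (volume.restrict (Ioc (0:ℝ) (2 * Real.pi))) →
      (∫⁻ z in ball (0:ℂ) 1, ENNReal.ofReal (‖Aop g z‖ ^ p)) ^ (1/p)
        ≤ ENNReal.ofReal C *
          (∫⁻ t in Ioc (0:ℝ) (2 * Real.pi), ENNReal.ofReal (‖g t‖ ^ p)) ^ (1/p) := by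
  obtain ⟨σ, hσ0, hσ1, hσp⟩ := hp
  have hp1 : 1 < p := lt_of_le_of_lt (by rw [le_div_iff₀ hσ0]; linarith) hσp
  have hp0 : (0:ℝ) < p := by linarith
  set a : ℝ := 1/(2*p) with hap
  set Λ : ℝ≥0∞ := (2:ℝ≥0∞) ^ p * Es (1-a) ^ (p-1) * (Ur * Es (1-a)) with hΛ
  have ha0 : 0 < a := by
    rw [hap]; exact div_pos one_pos (by linarith)
  have ha1 : a < 1 := by
    rw [hap, div_lt_one (by linarith)]; linarith
  have hΛtop : Λ ≠ ⊤ := by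
    have hEs : Es (1-a) ≠ ⊤ := (Es_lt_top (by linarith) (by linarith)).ne
    refine ENNReal.mul_ne_top (ENNReal.mul_ne_top ?_ ?_) (ENNReal.mul_ne_top Ur_lt_top.ne hEs)
    · exact ENNReal.rpow_ne_top_of_nonneg hp0.le (by norm_num)
    · exact ENNReal.rpow_ne_top_of_nonneg (by linarith) hEs
  have hΛp : Λ ^ (1/p) ≠ ⊤ := ENNReal.rpow_ne_top_of_nonneg (by positivity) hΛtop
  refine ⟨(Λ ^ (1/p)).toReal + 1, by positivity, fun g hper hmem => ?_⟩
  -- replace g by a measurable representative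
  set g' : ℝ → ℂ := (hmem.aestronglyMeasurable).mk g with hg'
  have hgm : Measurable g' := (hmem.aestronglyMeasurable.stronglyMeasurable_mk).measurable
  have hae : g =ᵐ[volume.restrict (Ioc (0:ℝ) (2*Real.pi))] g' :=
    hmem.aestronglyMeasurable.ae_eq_mk
  have hAop : ∀ z : ℂ, Aop g z = Aop g' z := by
    intro z
    refine intervalIntegral.integral_congr_ae ?_
    have h1 := (ae_restrict_iff' measurableSet_Ioc).mp hae
    rw [uIoc_of_le two_pi_pos.le]
    filter_upwards [h1] with t ht htm
    rw [ht htm]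
  have hRHS : ∫⁻ t in Ioc (0:ℝ) (2*Real.pi), ENNReal.ofReal (‖g t‖ ^ p)
      = ∫⁻ t in Ioc (0:ℝ) (2*Real.pi), ENNReal.ofReal ‖g' t‖ ^ p := by
    refine lintegral_congr_ae ?_
    filter_upwards [hae] with t ht
    rw [ht, ENNReal.ofReal_rpow_of_nonneg (norm_nonneg _) hp0.le]
  have hLHS : ∫⁻ z in ball (0:ℂ) 1, ENNReal.ofReal (‖Aop g z‖ ^ p)
      = ∫⁻ z in ball (0:ℂ) 1, ENNReal.ofReal ‖Aop g' z‖ ^ p := by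
    refine lintegral_congr fun z => ?_
    rw [hAop z, ENNReal.ofReal_rpow_of_nonneg (norm_nonneg _) hp0.le]
  rw [hLHS, hRHS]
  have hmain := mainBound hp1 hap g' hgm
  calc (∫⁻ z in ball (0:ℂ) 1, ENNReal.ofReal ‖Aop g' z‖ ^ p) ^ (1/p)
      ≤ (Λ * ∫⁻ t in Ioc 0 (2*Real.pi), ENNReal.ofReal ‖g' t‖ ^ p) ^ (1/p) :=
        ENNReal.rpow_le_rpow hmain (by positivity)
    _ = Λ ^ (1/p) * (∫⁻ t in Ioc 0 (2*Real.pi), ENNReal.ofReal ‖g' t‖ ^ p) ^ (1/p) :=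
        ENNReal.mul_rpow_of_nonneg _ _ (by positivity)
    _ ≤ ENNReal.ofReal ((Λ ^ (1/p)).toReal + 1)
          * (∫⁻ t in Ioc 0 (2*Real.pi), ENNReal.ofReal ‖g' t‖ ^ p) ^ (1/p) := by
        gcongr
        calc Λ ^ (1/p) = ENNReal.ofReal ((Λ ^ (1/p)).toReal) := (ENNReal.ofReal_toReal hΛp).symm
          _ ≤ ENNReal.ofReal ((Λ ^ (1/p)).toReal + 1) := ENNReal.ofReal_le_ofReal (by linarith)

end
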